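/- No unnecessary dups: In the abstract linear language λ̂_lin, let ae = infer(e). If ae contains a subterm dup Γ_d ae_s with x ∈ Γ_d, then every annotated term ae′ with erase(ae′) = e and Γ′ ⊩ ae′ for some multiset context Γ′ in which x occurs at most once also contains a subterm dup Γ_d′ ae_s′ with x ∈ Γ_d′. -/
import Mathlib


/-!
Formalization of the abstract linear language λ̂_lin from "Type Classes for
Lightweight Substructural Types" (Clamp), §4.1.
-/

namespace LamLin

/-- Unannotated terms: variables, abstractions, multiplicative pairs `⊗`, and
additive choices `&`. -/
inductive ETm : Type
| var : String → ETm
| lam : String → ETm → ETm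
| tens : ETm → ETm → ETm
| amp : ETm → ETm → ETm
deriving DecidableEq

/-- Annotated terms: additionally `dup Γ ae` and `drop Γ ae`, where `Γ` is a
multiset of variables. -/
inductive ATm : Type
| var : String → ATm
| lam : String → ATm → ATm
| tens : ATm → ATm → ATm
| amp : ATm → ATm → ATm
| dup : Multiset String → ATm → ATm
| drop : Multiset String → ATm → ATm

/-- Free variables of an unannotated term. -/
def ETm.fv : ETm → Finset String
| .var x => {x}
| .lam x e => e.fv \ {x}
| .tens a b => a.fv ∪ b.fv
| .amp a b => a.fv ∪ b.fv

/-- Free variables of an annotated term; for `dup Γ ae` and `drop Γ ae` this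
includes the variables of `Γ` together with the free variables of `ae`. -/
def ATm.fv : ATm → Finset String
| .var x => {x}
| .lam x a => a.fv \ {x}
| .tens a b => a.fv ∪ b.fv
| .amp a b => a.fv ∪ b.fv
| .dup Γ a => Γ.toFinset ∪ a.fv
| .drop Γ a => Γ.toFinset ∪ a.fv

/-- Well-formedness `Γ ⊩ ae` of an annotated term in a multiset context. -/
inductive WF : Multiset String → ATm → Prop
| var : WF {x} (.var x)
| lam : x ∉ Γ → WF (Γ + {x}) a → WF Γ (.lam x a)
| tens : WF Γ₁ a → WF Γ₂ b → WF (Γ₁ + Γ₂) (.tens a b)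
| amp : WF Γ a → WF Γ b → WF Γ (.amp a b)
| dup : WF (Γ₁ + Γ₂ + Γ₂) a → WF (Γ₁ + Γ₂) (.dup Γ₂ a)
| drop : WF Γ₁ a → WF (Γ₁ + Γ₂) (.drop Γ₂ a)

/-- The dup/drop inference (elaboration) algorithm. -/
def infer : ETm → ATm
| .var x => .var x
| .lam x e =>
    if x ∈ e.fv then .lam x (infer e) else .lam x (.drop {x} (infer e))
| .tens a b => .dup (a.fv ∩ b.fv).val (.tens (infer a) (infer b))
| .amp a b =>
    .amp (.drop (b.fv \ a.fv).val (infer a)) (.drop (a.fv \ b.fv).val (infer b))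

/-- Erasure of dup/drop annotations. -/
def erase : ATm → ETm
| .var x => .var x
| .lam x a => .lam x (erase a)
| .tens a b => .tens (erase a) (erase b)
| .amp a b => .amp (erase a) (erase b)
| .dup _ a => erase a
| .drop _ a => erase a

/-- `Subterm s t`: `s` occurs as a subterm of the annotated term `t`. -/
inductive Subterm : ATm → ATm → Prop
| refl : Subterm a a
| lam : Subterm s a → Subterm s (.lam x a)
| tensL : Subterm s a → Subterm s (.tens a b)
| tensR : Subterm s b → Subterm s (.tens a b)
| ampL : Subterm s a → Subterm s (.amp a b)
| ampR : Subterm s b → Subterm s (.amp a b)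
| dup : Subterm s a → Subterm s (.dup Γ a)
| drop : Subterm s a → Subterm s (.drop Γ a)

/-- `WFSub Γ ae Γₛ aeₛ`: there is a derivation of `Γ ⊩ ae` containing the
judgment `Γₛ ⊩ aeₛ` as a subderivation. -/
inductive WFSub : Multiset String → ATm → Multiset String → ATm → Prop
| refl : WF Γ a → WFSub Γ a Γ a
| lam : x ∉ Γ → WFSub (Γ + {x}) a Γs as → WFSub Γ (.lam x a) Γs as
| tensL : WFSub Γ₁ a Γs as → WF Γ₂ b → WFSub (Γ₁ + Γ₂) (.tens a b) Γs as
| tensR : WF Γ₁ a → WFSub Γ₂ b Γs as → WFSub (Γ₁ + Γ₂) (.tens a b) Γs as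
| ampL : WFSub Γ a Γs as → WF Γ b → WFSub Γ (.amp a b) Γs as
| ampR : WF Γ a → WFSub Γ b Γs as → WFSub Γ (.amp a b) Γs as
| dup : WFSub (Γ₁ + Γ₂ + Γ₂) a Γs as → WFSub (Γ₁ + Γ₂) (.dup Γ₂ a) Γs as
| drop : WFSub Γ₁ a Γs as → WFSub (Γ₁ + Γ₂) (.drop Γ₂ a) Γs as

end LamLin

namespace LamLin

/-- Occurrence count of a free variable, taking `max` at `&`. -/
def occ (x : String) : ETm → ℕ
| .var y => if y = x then 1 else 0
| .lam y e => if y = x then 0 else occ x e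
| .tens a b => occ x a + occ x b
| .amp a b => max (occ x a) (occ x b)

lemma occ_pos_of_mem_fv {x : String} {e : ETm} (h : x ∈ e.fv) : 1 ≤ occ x e := by
  induction e with
  | var y =>
    simp [ETm.fv] at h
    simp [occ, h]
  | lam y e ih =>
    simp [ETm.fv] at h
    have hy : ¬ y = x := fun hy => h.2 hy.symm
    simpa [occ, hy] using ih h.1
  | tens a b iha ihb =>
    simp [ETm.fv] at h
    rcases h with h | h
    · have := iha h; simp [occ]; omega
    · have := ihb h; simp [occ]; omega
  | amp a b iha ihb =>
    simp [ETm.fv] at h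
    rcases h with h | h
    · have := iha h; simp [occ]; omega
    · have := ihb h; simp [occ]; omega

lemma count_bound {x : String} {Γ : Multiset String} {a : ATm}
    (hwf : WF Γ a)
    (hnd : ∀ Γd aes, Subterm (.dup Γd aes) a → x ∉ Γd) :
    occ x (erase a) ≤ Γ.count x := by
  induction hwf with
  | @var y =>
    by_cases hxy : y = x
    · subst hxy; simp [erase, occ]
    · simp only [erase, occ, if_neg hxy]
      exact Nat.zero_le _
  | @lam Γ y a hy hwfa ih =>
    have ih' := ih (fun Γd aes hs => hnd Γd aes (.lam hs))
    by_cases hxy : y = x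
    · simp [erase, occ, hxy]
    · have hxy' : ¬ x = y := fun h => hxy h.symm
      have hcnt : Multiset.count x (Γ + {y}) = Multiset.count x Γ := by
        simp [Multiset.count_add, Multiset.count_singleton, hxy']
      simp only [erase, occ, if_neg hxy]
      omega
  | @tens Γ₁ a Γ₂ b hwfa hwfb iha ihb =>
    have iha' := iha (fun Γd aes hs => hnd Γd aes (.tensL hs))
    have ihb' := ihb (fun Γd aes hs => hnd Γd aes (.tensR hs))
    simp [erase, occ, Multiset.count_add]
    omega
  | @amp Γ a b hwfa hwfb iha ihb =>
    have iha' := iha (fun Γd aes hs => hnd Γd aes (.ampL hs))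
    have ihb' := ihb (fun Γd aes hs => hnd Γd aes (.ampR hs))
    simp [erase, occ]
    omega
  | @dup Γ₁ Γ₂ a hwfa ih =>
    have ih' := ih (fun Γd aes hs => hnd Γd aes (.dup hs))
    have hx2 : x ∉ Γ₂ := hnd Γ₂ a .refl
    have h0 : Multiset.count x Γ₂ = 0 := Multiset.count_eq_zero_of_notMem hx2
    simp only [erase, Multiset.count_add, h0] at ih' ⊢
    omega
  | @drop Γ₁ a Γ₂ hwfa ih =>
    have ih' := ih (fun Γd aes hs => hnd Γd aes (.drop hs))
    simp only [erase, Multiset.count_add] at ih' ⊢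
    omega

lemma dup_of_unused {x : String} {Γ : Multiset String} {a : ATm}
    (hwf : WF Γ a) (hfv : x ∈ (erase a).fv) (hc : Γ.count x = 0) :
    ∃ Γd aes, Subterm (.dup Γd aes) a ∧ x ∈ Γd := by
  by_contra hno
  push_neg at hno
  have hnd : ∀ Γd aes, Subterm (.dup Γd aes) a → x ∉ Γd := hno
  have h1 := occ_pos_of_mem_fv hfv
  have h2 := count_bound hwf hnd
  omega

/-- **No unnecessary dups** (Lemma 12 of the Clamp paper).
Let `ae = infer(e)`. If `ae` contains a subterm `dup Γ_d ae_s` with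
`x ∈ Γ_d`, then every annotated term `ae′` with `erase(ae′) = e` that is
well formed in some context `Γ′` in which `x` occurs at most once also
contains a subterm `dup Γ_d′ ae_s′` with `x ∈ Γ_d′`. -/
theorem no_unnecessary_dups
    {e : ETm} {x : String} {Γd : Multiset String} {aes : ATm}
    (h : Subterm (.dup Γd aes) (infer e)) (hx : x ∈ Γd)
    {ae' : ATm} {Γ' : Multiset String}
    (hwf : WF Γ' ae') (herase : erase ae' = e) (hcount : Γ'.count x ≤ 1) :
    ∃ (Γd' : Multiset String) (aes' : ATm),
      Subterm (.dup Γd' aes') ae' ∧ x ∈ Γd' := by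
  subst herase
  revert h hcount
  induction hwf with
  | @var y =>
    intro hc h
    simp only [erase, infer] at h
    cases h
  | @lam Γ y a hy hwfa ih =>
    intro hc h
    have hcount' : (Γ + {y}).count x ≤ 1 := by
      by_cases hxy : x = y
      · subst hxy
        have h0 : Multiset.count x Γ = 0 :=
          Multiset.count_eq_zero_of_notMem hy
        simp [Multiset.count_add, Multiset.count_singleton, h0]
      · simpa [Multiset.count_add, Multiset.count_singleton, hxy] using hc
    simp only [erase, infer] at h
    by_cases hfv : y ∈ (erase a).fv
    · simp only [hfv, if_true] at h
      cases h with
      | lam hs =>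
        obtain ⟨Γd', aes', hsub, hmem⟩ := ih hcount' hs
        exact ⟨Γd', aes', .lam hsub, hmem⟩
    · simp only [hfv, if_false] at h
      cases h with
      | lam hs =>
        cases hs with
        | drop hs' =>
          obtain ⟨Γd', aes', hsub, hmem⟩ := ih hcount' hs'
          exact ⟨Γd', aes', .lam hsub, hmem⟩
  | @tens Γ₁ a Γ₂ b hwfa hwfb iha ihb =>
    intro hc h
    have hc₁ : Γ₁.count x ≤ 1 := by
      simp [Multiset.count_add] at hc; omega
    have hc₂ : Γ₂.count x ≤ 1 := by
      simp [Multiset.count_add] at hc; omega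
    simp only [erase, infer] at h
    cases h with
    | refl =>
      -- Γd = ((erase a).fv ∩ (erase b).fv).val
      have hxa : x ∈ (erase a).fv ∧ x ∈ (erase b).fv := by
        have := Finset.mem_val.mp hx
        exact Finset.mem_inter.mp this
      have hzero : Γ₁.count x = 0 ∨ Γ₂.count x = 0 := by
        simp [Multiset.count_add] at hc; omega
      rcases hzero with h0 | h0
      · obtain ⟨Γd', aes', hsub, hmem⟩ := dup_of_unused hwfa hxa.1 h0
        exact ⟨Γd', aes', .tensL hsub, hmem⟩
      · obtain ⟨Γd', aes', hsub, hmem⟩ := dup_of_unused hwfb hxa.2 h0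
        exact ⟨Γd', aes', .tensR hsub, hmem⟩
    | dup hs =>
      cases hs with
      | tensL hs' =>
        obtain ⟨Γd', aes', hsub, hmem⟩ := iha hc₁ hs'
        exact ⟨Γd', aes', .tensL hsub, hmem⟩
      | tensR hs' =>
        obtain ⟨Γd', aes', hsub, hmem⟩ := ihb hc₂ hs'
        exact ⟨Γd', aes', .tensR hsub, hmem⟩
  | @amp Γ a b hwfa hwfb iha ihb =>
    intro hc h
    simp only [erase, infer] at h
    cases h with
    | ampL hs =>
      cases hs with
      | drop hs' =>
        obtain ⟨Γd', aes', hsub, hmem⟩ := iha hc hs'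
        exact ⟨Γd', aes', .ampL hsub, hmem⟩
    | ampR hs =>
      cases hs with
      | drop hs' =>
        obtain ⟨Γd', aes', hsub, hmem⟩ := ihb hc hs'
        exact ⟨Γd', aes', .ampR hsub, hmem⟩
  | @dup Γ₁ Γ₂ a hwfa ih =>
    intro hc h
    by_cases hx2 : x ∈ Γ₂
    · exact ⟨Γ₂, a, .refl, hx2⟩
    · have h0 : Multiset.count x Γ₂ = 0 := Multiset.count_eq_zero_of_notMem hx2
      have hc' : (Γ₁ + Γ₂ + Γ₂).count x ≤ 1 := by
        simp [Multiset.count_add, h0]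
        simp [Multiset.count_add, h0] at hc
        omega
      simp only [erase] at h
      obtain ⟨Γd', aes', hsub, hmem⟩ := ih hc' h
      exact ⟨Γd', aes', .dup hsub, hmem⟩
  | @drop Γ₁ a Γ₂ hwfa ih =>
    intro hc h
    have hc' : Γ₁.count x ≤ 1 := by
      simp [Multiset.count_add] at hc; omega
    simp only [erase] at h
    obtain ⟨Γd', aes', hsub, hmem⟩ := ih hc' h
    exact ⟨Γd', aes', .drop hsub, hmem⟩

end LamLin
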